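/- Fix a > 0 and q ∈ (1, 2). Define D(x) = G_a(x, qx) − G_a(x, x/q), where G_a is as below. Then D(x_*) = 0 at x_* = 2πq/((q+1)(q−1)), and D is strictly decreasing on (0, 2π/(q−1)); in particular G_a(x, qx) ≥ G_a(x, x/q) for all x ∈ (0, π/2]. -/

import Mathlib

open Real

noncomputable def Ga (a x y : ℝ) : ℝ :=
  (1 / (2 * π)) * Real.log
    (((1 + a ^ 2 / x ^ 2) / (1 + a ^ 2 / (x - y) ^ 2)) *
      ((1 + a ^ 2 / (2 * π - x) ^ 2) /
        (1 + a ^ 2 / (x - y + 2 * π * Real.sign (y - x)) ^ 2)))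

namespace GaAux

noncomputable def fa (a t : ℝ) : ℝ := Real.log (t ^ 2 + a ^ 2) - 2 * Real.log t

noncomputable def fa' (a t : ℝ) : ℝ := 2 * t / (t ^ 2 + a ^ 2) - 2 / t

noncomputable def ga (a t : ℝ) : ℝ := fa a t + fa a (2 * π - t)

noncomputable def ga' (a t : ℝ) : ℝ := fa' a t - fa' a (2 * π - t)

noncomputable def Dq (a q x : ℝ) : ℝ :=
  (1 / (2 * π)) * (ga a ((q - 1) * x / q) - ga a ((q - 1) * x))

lemma log_one_add {a t : ℝ} (ha : 0 < a) (ht : 0 < t) :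
    Real.log (1 + a ^ 2 / t ^ 2) = fa a t := by
  have h1 : (1 : ℝ) + a ^ 2 / t ^ 2 = (t ^ 2 + a ^ 2) / t ^ 2 := by field_simp
  rw [fa, h1, Real.log_div (by positivity) (by positivity), Real.log_pow]
  push_cast
  ring

lemma ga_symm (a t : ℝ) : ga a (2 * π - t) = ga a t := by
  simp only [ga]
  rw [show 2 * π - (2 * π - t) = t by ring]
  ring

lemma hasDerivAt_fa {a t : ℝ} (ha : 0 < a) (ht : 0 < t) :
    HasDerivAt (fa a) (fa' a t) t := by
  have h1 : HasDerivAt (fun s : ℝ => s ^ 2 + a ^ 2) (2 * t) t := by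
    simpa using (hasDerivAt_pow 2 t).add_const (a ^ 2)
  have h2 : HasDerivAt (fun s : ℝ => Real.log (s ^ 2 + a ^ 2)) (2 * t / (t ^ 2 + a ^ 2)) t :=
    h1.log (by positivity)
  have h3 : HasDerivAt (fun s : ℝ => 2 * Real.log s) (2 / t) t := by
    simpa [div_eq_mul_inv, mul_comm] using (Real.hasDerivAt_log ht.ne').const_mul 2
  exact h2.sub h3

lemma hasDerivAt_ga {a t : ℝ} (ha : 0 < a) (ht : 0 < t) (ht2 : t < 2 * π) :
    HasDerivAt (ga a) (ga' a t) t := by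
  have hu : 0 < 2 * π - t := by linarith
  have h1 : HasDerivAt (fun s : ℝ => 2 * π - s) (-1) t := by
    simpa using (hasDerivAt_id t).const_sub (2 * π)
  have h2 : HasDerivAt (fun s : ℝ => fa a (2 * π - s)) (fa' a (2 * π - t) * (-1)) t :=
    (hasDerivAt_fa ha hu).comp t h1
  have h3 := (hasDerivAt_fa ha ht).add h2
  rw [show ga' a t = fa' a t + fa' a (2 * π - t) * (-1) by simp only [ga']; ring]
  exact h3

lemma fa'_eq {a t : ℝ} (ha : 0 < a) (ht : 0 < t) :
    fa' a t = -(2 * a ^ 2 / (t * (t ^ 2 + a ^ 2))) := by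
  rw [fa']
  field_simp
  ring

lemma key_ineq {a q t : ℝ} (ha : 0 < a) (hq : 1 < q) (ht : 0 < t) (ht2 : t < 2 * π) :
    (1 / q) * ga' a (t / q) < ga' a t := by
  have hq0 : 0 < q := by linarith
  have hc : 0 < t / q := by positivity
  have hct : t / q < t := div_lt_self ht hq
  have hu : 0 < 2 * π - t := by linarith
  have hv : 0 < 2 * π - t / q := by linarith
  have huv : 2 * π - t < 2 * π - t / q := by linarith
  -- A : (1/q) * fa' a (t/q) < fa' a t
  have hA : (1 / q) * fa' a (t / q) < fa' a t := by
    rw [fa'_eq ha hc, fa'_eq ha ht]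
    have e : (1 / q) * -(2 * a ^ 2 / (t / q * ((t / q) ^ 2 + a ^ 2))) =
        -(2 * a ^ 2 * q ^ 2 / (t * (t ^ 2 + q ^ 2 * a ^ 2))) := by
      field_simp
    rw [e, neg_lt_neg_iff, div_lt_div_iff₀ (by positivity) (by positivity)]
    nlinarith [mul_pos (mul_pos (by positivity : (0:ℝ) < 2 * a ^ 2) (pow_pos ht 3))
      (by nlinarith : (0:ℝ) < q ^ 2 - 1)]
  -- B : fa' a (2π - t) < (1/q) * fa' a (2π - t/q)
  have hB : fa' a (2 * π - t) < (1 / q) * fa' a (2 * π - t / q) := by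
    rw [fa'_eq ha hu, fa'_eq ha hv]
    set u := 2 * π - t with hud
    set v := 2 * π - t / q with hvd
    have e : (1 / q) * -(2 * a ^ 2 / (v * (v ^ 2 + a ^ 2))) =
        -(2 * a ^ 2 / (q * (v * (v ^ 2 + a ^ 2)))) := by
      field_simp
    rw [e, neg_lt_neg_iff, div_lt_div_iff₀ (by positivity) (by positivity)]
    have h3 : u ^ 3 < v ^ 3 := by nlinarith [mul_pos hu hv, sq_nonneg (u + v), sq_nonneg (u - v)]
    have ha2 : u * a ^ 2 < v * a ^ 2 :=
      mul_lt_mul_of_pos_right huv (by positivity)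
    have h1 : u * (u ^ 2 + a ^ 2) < v * (v ^ 2 + a ^ 2) := by nlinarith [h3, ha2]
    have h2 : v * (v ^ 2 + a ^ 2) < q * (v * (v ^ 2 + a ^ 2)) := by
      nlinarith [mul_pos hv (by positivity : (0:ℝ) < v ^ 2 + a ^ 2)]
    exact mul_lt_mul_of_pos_left (h1.trans h2) (by positivity)
  simp only [ga', mul_sub]
  linarith

lemma hasDerivAt_Dq {a q x : ℝ} (ha : 0 < a) (hq : 1 < q) (hx : 0 < x)
    (hx2 : (q - 1) * x < 2 * π) :
    HasDerivAt (Dq a q)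
      ((1 / (2 * π)) * ((q - 1) / q * ga' a ((q - 1) * x / q) - (q - 1) * ga' a ((q - 1) * x))) x := by
  have hq0 : 0 < q := by linarith
  have hb : 0 < (q - 1) * x := by nlinarith
  have hc : 0 < (q - 1) * x / q := by positivity
  have hc2 : (q - 1) * x / q < 2 * π := lt_trans (div_lt_self hb hq) hx2
  have l1 : HasDerivAt (fun x : ℝ => (q - 1) * x / q) ((q - 1) / q) x := by
    simpa [mul_div_assoc, mul_comm] using
      ((hasDerivAt_id x).const_mul ((q - 1) / q))
  have l2 : HasDerivAt (fun x : ℝ => (q - 1) * x) (q - 1) x := by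
    simpa using (hasDerivAt_id x).const_mul (q - 1)
  have h1 : HasDerivAt (fun x : ℝ => ga a ((q - 1) * x / q))
      (ga' a ((q - 1) * x / q) * ((q - 1) / q)) x :=
    by have := (hasDerivAt_ga ha hc hc2).comp x l1; exact this
  have h2 : HasDerivAt (fun x : ℝ => ga a ((q - 1) * x))
      (ga' a ((q - 1) * x) * (q - 1)) x :=
    (hasDerivAt_ga ha hb hx2).comp x l2
  have := ((h1.sub h2).const_mul (1 / (2 * π)))
  rw [show (1 / (2 * π)) * ((q - 1) / q * ga' a ((q - 1) * x / q) - (q - 1) * ga' a ((q - 1) * x)) =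
    1 / (2 * π) * (ga' a ((q - 1) * x / q) * ((q - 1) / q) - ga' a ((q - 1) * x) * (q - 1)) by ring]
  exact this

lemma strictAnti_Dq {a q : ℝ} (ha : 0 < a) (hq : 1 < q) :
    StrictAntiOn (Dq a q) (Set.Ioo 0 (2 * π / (q - 1))) := by
  have hq1 : 0 < q - 1 := by linarith
  have hmem : ∀ x ∈ Set.Ioo (0:ℝ) (2 * π / (q - 1)), 0 < x ∧ (q - 1) * x < 2 * π := by
    intro x hx
    refine ⟨hx.1, ?_⟩
    have := hx.2
    rw [lt_div_iff₀ hq1] at this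
    linarith [this]
  apply strictAntiOn_of_deriv_neg (convex_Ioo _ _)
  · intro x hx
    obtain ⟨h1, h2⟩ := hmem x hx
    exact (hasDerivAt_Dq ha hq h1 h2).continuousAt.continuousWithinAt
  · intro x hx
    rw [interior_Ioo] at hx
    obtain ⟨h1, h2⟩ := hmem x hx
    rw [(hasDerivAt_Dq ha hq h1 h2).deriv]
    have hb : 0 < (q - 1) * x := by positivity
    have key := key_ineq ha hq hb h2
    have h2pi : 0 < 2 * π := by positivity
    have : (q - 1) / q * ga' a ((q - 1) * x / q) - (q - 1) * ga' a ((q - 1) * x) < 0 := by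
      have := mul_lt_mul_of_pos_left key hq1
      have e1 : (q - 1) * ((1 / q) * ga' a ((q - 1) * x / q)) =
          (q - 1) / q * ga' a ((q - 1) * x / q) := by ring
      rw [e1] at this
      linarith
    have h1 : (0:ℝ) < 1 / (2 * π) := by positivity
    nlinarith

lemma one_add_pos (a s : ℝ) : (0:ℝ) < 1 + a ^ 2 / s ^ 2 := by positivity

lemma Ga_sub_eq {a q x : ℝ} (ha : 0 < a) (hq : 1 < q) (hx : 0 < x)
    (hx2 : (q - 1) * x < 2 * π) :
    Ga a x (q * x) - Ga a x (x / q) = Dq a q x := by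
  have hq0 : 0 < q := by linarith
  set b := (q - 1) * x with hbdef
  set c := (q - 1) * x / q with hcdef
  have hb : 0 < b := by rw [hbdef]; exact mul_pos (by linarith) hx
  have hc : 0 < c := by rw [hcdef]; exact div_pos (mul_pos (by linarith) hx) hq0
  have hb2 : b < 2 * π := hx2
  have hc2 : c < 2 * π := lt_trans (div_lt_self hb hq) hx2
  have hsign1 : Real.sign (q * x - x) = 1 :=
    Real.sign_of_pos (by nlinarith)
  have hsign2 : Real.sign (x / q - x) = -1 :=
    Real.sign_of_neg (by
      have := div_lt_self hx hq
      linarith)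
  have e1 : Ga a x (q * x) = (1 / (2 * π)) *
      (Real.log (1 + a ^ 2 / x ^ 2) - Real.log (1 + a ^ 2 / b ^ 2) +
        (Real.log (1 + a ^ 2 / (2 * π - x) ^ 2) - Real.log (1 + a ^ 2 / (2 * π - b) ^ 2))) := by
    rw [Ga, hsign1]
    rw [show (x - q * x) ^ 2 = b ^ 2 by rw [hbdef]; ring,
      show x - q * x + 2 * π * 1 = 2 * π - b by rw [hbdef]; ring]
    rw [Real.log_mul (by positivity) (by positivity),
      Real.log_div (one_add_pos a x).ne' (one_add_pos a b).ne',
      Real.log_div (one_add_pos a (2 * π - x)).ne' (one_add_pos a (2 * π - b)).ne']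
  have e2 : Ga a x (x / q) = (1 / (2 * π)) *
      (Real.log (1 + a ^ 2 / x ^ 2) - Real.log (1 + a ^ 2 / c ^ 2) +
        (Real.log (1 + a ^ 2 / (2 * π - x) ^ 2) - Real.log (1 + a ^ 2 / (2 * π - c) ^ 2))) := by
    rw [Ga, hsign2]
    rw [show (x - x / q) ^ 2 = c ^ 2 by rw [hcdef]; field_simp,
      show (x - x / q + 2 * π * (-1)) ^ 2 = (2 * π - c) ^ 2 by rw [hcdef]; field_simp; ring]
    rw [Real.log_mul (by positivity) (by positivity),
      Real.log_div (one_add_pos a x).ne' (one_add_pos a c).ne',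
      Real.log_div (one_add_pos a (2 * π - x)).ne' (one_add_pos a (2 * π - c)).ne']
  rw [e1, e2, Dq, ga, ga,
    ← log_one_add ha hb, ← log_one_add ha hc,
    ← log_one_add ha (by linarith : (0:ℝ) < 2 * π - b),
    ← log_one_add ha (by linarith : (0:ℝ) < 2 * π - c)]
  ring

end GaAux

open GaAux in
theorem Ga_difference_monotone (a q : ℝ) (ha : 0 < a) (hq : q ∈ Set.Ioo 1 2) :
    (Ga a (2 * π * q / ((q + 1) * (q - 1))) (q * (2 * π * q / ((q + 1) * (q - 1)))) -
      Ga a (2 * π * q / ((q + 1) * (q - 1))) ((2 * π * q / ((q + 1) * (q - 1))) / q) = 0) ∧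
    StrictAntiOn (fun x => Ga a x (q * x) - Ga a x (x / q)) (Set.Ioo 0 (2 * π / (q - 1))) ∧
    (∀ x ∈ Set.Ioc 0 (π / 2), Ga a x (x / q) ≤ Ga a x (q * x)) := by
  obtain ⟨hq1, hq2⟩ := hq
  have hq1' : 0 < q - 1 := by linarith
  have hq0 : 0 < q := by linarith
  have hpi : 0 < π := Real.pi_pos
  set xs := 2 * π * q / ((q + 1) * (q - 1)) with hxs
  have hxs0 : 0 < xs := by positivity
  have hxsb : (q - 1) * xs < 2 * π := by
    rw [hxs]
    rw [show (q - 1) * (2 * π * q / ((q + 1) * (q - 1))) = 2 * π * q / (q + 1) by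
      field_simp]
    rw [div_lt_iff₀ (by linarith : (0:ℝ) < q + 1)]
    nlinarith
  -- membership helper
  have hmem : ∀ y : ℝ, 0 < y → (q - 1) * y < 2 * π → y ∈ Set.Ioo (0:ℝ) (2 * π / (q - 1)) := by
    intro y h1 h2
    exact ⟨h1, by rw [lt_div_iff₀ hq1']; linarith [h2]⟩
  -- part 1
  have part1 : Ga a xs (q * xs) - Ga a xs (xs / q) = 0 := by
    rw [Ga_sub_eq ha hq1 hxs0 hxsb, Dq]
    have hsym : (q - 1) * xs / q = 2 * π - (q - 1) * xs := by
      rw [hxs]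
      field_simp
      ring
    have h : ga a ((q - 1) * xs / q) = ga a ((q - 1) * xs) := by
      rw [hsym]; exact ga_symm a _
    rw [h, sub_self, mul_zero]
  -- part 2
  have part2 : StrictAntiOn (fun x => Ga a x (q * x) - Ga a x (x / q))
      (Set.Ioo 0 (2 * π / (q - 1))) := by
    intro x hx y hy hxy
    have hx' : (q - 1) * x < 2 * π := by
      have := hx.2; rw [lt_div_iff₀ hq1'] at this; linarith
    have hy' : (q - 1) * y < 2 * π := by
      have := hy.2; rw [lt_div_iff₀ hq1'] at this; linarith
    simp only
    rw [Ga_sub_eq ha hq1 hx.1 hx', Ga_sub_eq ha hq1 hy.1 hy']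
    exact strictAnti_Dq ha hq1 hx hy hxy
  refine ⟨part1, part2, ?_⟩
  intro x hx
  have hxpos : 0 < x := hx.1
  have hxle : x ≤ π / 2 := hx.2
  have hxb : (q - 1) * x < 2 * π := by nlinarith
  have hxxs : x < xs := by
    have : π / 2 < xs := by
      rw [hxs, lt_div_iff₀ (by positivity : (0:ℝ) < (q + 1) * (q - 1))]
      nlinarith [mul_pos hpi (show (0:ℝ) < 4 * q - q ^ 2 + 1 by nlinarith)]
    linarith
  have hlt := part2 (hmem x hxpos hxb) (hmem xs hxs0 hxsb) hxxs
  simp only at hlt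
  rw [part1] at hlt
  linarith
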